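/- Let n, m, d, e, d' be positive integers, let R : Fin n → Fin m → Prop be a decidable incidence relation between lower-rank and higher-rank cells, let a : (Fin d → ℝ) → (Fin e → ℝ) → ℝ be a shared scoring function, and fix W ∈ Matrix (Fin d) (Fin d') ℝ and φ : ℝ → ℝ. Define the attention-weighted incidence transport T(R, H, G) ∈ Matrix (Fin m) (Fin d') ℝ by T(R, H, G) j k = φ (∑ over i with R i j of a (H i) (G j) * (H * W) i k), for H ∈ Matrix (Fin n) (Fin d) ℝ and G ∈ Matrix (Fin m) (Fin e) ℝ. Then for all permutations σ of Fin n and τ of Fin m, defining the reindexed relation R' by R' (σ i) (τ j) ↔ R i j, the transport is reindexing-equivariant: T(R', P_σ * H, P_τ * G) = P_τ * T(R, H, G). -/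
import Mathlib


open Matrix

/-- The `n × n` permutation matrix of a permutation `σ` of `Fin n`:
left multiplication by `permMat σ` permutes rows according to `σ`. -/
noncomputable def permMat {n : ℕ} (σ : Equiv.Perm (Fin n)) : Matrix (Fin n) (Fin n) ℝ :=
  fun i j => if σ j = i then 1 else 0

/-- Attention-weighted incidence transport: the feature of target cell `j` is
`φ` of the sum, over incident source cells `i` (those with `R i j`), of the
attention weight `a (H i) (G j)` times the transformed source feature
`(H * W) i k`. -/
noncomputable def attnTransport {n m d e d' : ℕ}
    (R : Fin n → Fin m → Prop) [∀ i j, Decidable (R i j)]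
    (a : (Fin d → ℝ) → (Fin e → ℝ) → ℝ)
    (W : Matrix (Fin d) (Fin d') ℝ) (φ : ℝ → ℝ)
    (H : Matrix (Fin n) (Fin d) ℝ) (G : Matrix (Fin m) (Fin e) ℝ) :
    Matrix (Fin m) (Fin d') ℝ :=
  fun j k => φ (∑ i ∈ Finset.univ.filter (fun i : Fin n => R i j),
    a (H i) (G j) * (H * W) i k)

lemma permMat_mul_apply {n k : ℕ} (σ : Equiv.Perm (Fin n))
    (H : Matrix (Fin n) (Fin k) ℝ) (i : Fin n) :
    (permMat σ * H) i = H (σ⁻¹ i) := by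
  funext c
  simp only [Matrix.mul_apply, permMat]
  rw [Finset.sum_eq_single (σ⁻¹ i)]
  · simp
  · intro b _ hb
    rw [if_neg, zero_mul]
    intro h; exact hb (by simp [← h])
  · simp


/-- Attention-weighted incidence transport with a shared
scoring function `a` is reindexing-equivariant: for permutations `σ` of the
source cells and `τ` of the target cells, and the reindexed incidence relation
`R'` with `R' (σ i) (τ j) ↔ R i j`,
`T(R', P_σ * H, P_τ * G) = P_τ * T(R, H, G)`. -/
theorem attention_transport_equivariant (n m d e d' : ℕ)
    (hn : 0 < n) (hm : 0 < m) (hd : 0 < d) (he : 0 < e) (hd' : 0 < d')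
    (R : Fin n → Fin m → Prop) [∀ i j, Decidable (R i j)]
    (a : (Fin d → ℝ) → (Fin e → ℝ) → ℝ)
    (W : Matrix (Fin d) (Fin d') ℝ) (φ : ℝ → ℝ)
    (σ : Equiv.Perm (Fin n)) (τ : Equiv.Perm (Fin m))
    (R' : Fin n → Fin m → Prop) [∀ i j, Decidable (R' i j)]
    (hR' : ∀ i j, R' (σ i) (τ j) ↔ R i j)
    (H : Matrix (Fin n) (Fin d) ℝ) (G : Matrix (Fin m) (Fin e) ℝ) :
    attnTransport R' a W φ (permMat σ * H) (permMat τ * G)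
      = permMat τ * attnTransport R a W φ H G := by
  funext j k
  have hPH : ∀ i, (permMat σ * H) i = H (σ⁻¹ i) := permMat_mul_apply σ H
  have hPG : ∀ j, (permMat τ * G) j = G (τ⁻¹ j) := permMat_mul_apply τ G
  have hRHS : (permMat τ * attnTransport R a W φ H G) j k
      = attnTransport R a W φ H G (τ⁻¹ j) k := by
    have := congrFun (permMat_mul_apply τ (attnTransport R a W φ H G) j) k
    exact this
  rw [hRHS]
  simp only [attnTransport]
  congr 1
  have hmul : permMat σ * H * W = permMat σ * (H * W) := by rw [Matrix.mul_assoc]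
  refine Finset.sum_nbij' (fun i => σ⁻¹ i) (fun i => σ i) ?_ ?_ ?_ ?_ ?_
  · intro i hi
    simp only [Finset.mem_filter, Finset.mem_univ, true_and] at hi ⊢
    have := (hR' (σ⁻¹ i) (τ⁻¹ j)).mp (by simpa using hi)
    exact this
  · intro i hi
    simp only [Finset.mem_filter, Finset.mem_univ, true_and] at hi ⊢
    have := (hR' i (τ⁻¹ j)).mpr hi
    simpa using this
  · intro i _; simp
  · intro i _; simp
  · intro i _
    rw [hPH, hPG, hmul, congrFun (permMat_mul_apply σ (H*W) i) k]
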